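/- For every k, n ≥ 2, the optimal Kalton constant K(kn) on a set of kn elements satisfies K(kn) ≥ 3 - 4k/((n+1)k-1) - (n-1)/k · 4k/((n+1)k-1); equivalently, K(kn) ≥ a_{k,n} where a_{k,n} → 3 as k, n → ∞. -/

import Mathlib

open Finset

def fkn (n k : ℕ) (A : Finset (Fin n × Fin k)) : ℝ :=
  if A = ∅ then 0
  else if (∀ j : Fin n, ∃ i : Fin k, (j, i) ∈ A) ∧ (∃ j : Fin n, ∀ i : Fin k, (j, i) ∈ A)
    then 3 else 1

def OneAdditive {Ω : Type*} [DecidableEq Ω] (f : Finset Ω → ℝ) : Prop :=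
  f ∅ = 0 ∧ ∀ A B : Finset Ω, Disjoint A B → |f A + f B - f (A ∪ B)| ≤ 1

def IsAdditive {Ω : Type*} [DecidableEq Ω] (μ : Finset Ω → ℝ) : Prop :=
  μ ∅ = 0 ∧ ∀ A B : Finset Ω, Disjoint A B → μ (A ∪ B) = μ A + μ B

lemma fkn_ne_empty {n k : ℕ} {A : Finset (Fin n × Fin k)} (hA : A ≠ ∅) :
    fkn n k A = if (∀ j : Fin n, ∃ i : Fin k, (j, i) ∈ A) ∧
      (∃ j : Fin n, ∀ i : Fin k, (j, i) ∈ A) then 3 else 1 := by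
  simp only [fkn, if_neg hA]

lemma fkn_oneAdditive (n k : ℕ) : OneAdditive (fkn n k) := by
  refine ⟨by simp [fkn], ?_⟩
  intro A B hAB
  by_cases hA : A = ∅
  · subst hA; simp [fkn]
  by_cases hB : B = ∅
  · subst hB; simp [fkn]
  have hU : A ∪ B ≠ ∅ := fun h => hA (Finset.union_eq_empty.mp h).1
  rw [fkn_ne_empty hA, fkn_ne_empty hB, fkn_ne_empty hU]
  by_cases hPA : (∀ j : Fin n, ∃ i : Fin k, (j, i) ∈ A) ∧
      (∃ j : Fin n, ∀ i : Fin k, (j, i) ∈ A)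
  · have hPU : (∀ j : Fin n, ∃ i : Fin k, (j, i) ∈ A ∪ B) ∧
        (∃ j : Fin n, ∀ i : Fin k, (j, i) ∈ A ∪ B) :=
      ⟨fun j => (hPA.1 j).imp fun i hi => Finset.mem_union_left _ hi,
        hPA.2.imp fun j hj i => Finset.mem_union_left _ (hj i)⟩
    have hPB : ¬ ((∀ j : Fin n, ∃ i : Fin k, (j, i) ∈ B) ∧
        (∃ j : Fin n, ∀ i : Fin k, (j, i) ∈ B)) := by
      rintro ⟨hB1, -⟩
      obtain ⟨j0, hj0⟩ := hPA.2
      obtain ⟨i0, hi0⟩ := hB1 j0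
      exact (Finset.disjoint_left.mp hAB (hj0 i0)) hi0
    rw [if_pos hPA, if_neg hPB, if_pos hPU]; norm_num
  · by_cases hPB : (∀ j : Fin n, ∃ i : Fin k, (j, i) ∈ B) ∧
        (∃ j : Fin n, ∀ i : Fin k, (j, i) ∈ B)
    · have hPU : (∀ j : Fin n, ∃ i : Fin k, (j, i) ∈ A ∪ B) ∧
          (∃ j : Fin n, ∀ i : Fin k, (j, i) ∈ A ∪ B) :=
        ⟨fun j => (hPB.1 j).imp fun i hi => Finset.mem_union_right _ hi,
          hPB.2.imp fun j hj i => Finset.mem_union_right _ (hj i)⟩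
      rw [if_neg hPA, if_pos hPB, if_pos hPU]; norm_num
    · rw [if_neg hPA, if_neg hPB]
      split <;> norm_num

theorem stmt_9 (k n : ℕ) (hk : 2 ≤ k) (hn : 2 ≤ n) (K : ℝ)
    (hK : ∀ f : Finset (Fin n × Fin k) → ℝ, OneAdditive f →
      ∃ μ : Finset (Fin n × Fin k) → ℝ, IsAdditive μ ∧ ∀ A, |f A - μ A| ≤ K) :
    K ≥ 3 - 4 * k / ((n + 1) * k - 1) - ((n : ℝ) - 1) / k * (4 * k / ((n + 1) * k - 1)) := by
  classical
  obtain ⟨μ, ⟨hμ0, hμadd⟩, hcl⟩ := hK (fkn n k) (fkn_oneAdditive n k)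
  set e : Fin n × Fin k → ℝ := fun x => μ {x} with he
  have hsum : ∀ A : Finset (Fin n × Fin k), μ A = ∑ x ∈ A, e x := by
    intro A
    induction A using Finset.induction_on with
    | empty => simp [hμ0]
    | @insert a s ha ih =>
        rw [Finset.sum_insert ha, ← ih, Finset.insert_eq,
          hμadd _ _ (Finset.disjoint_singleton_left.mpr ha)]
  set r : Fin n → ℝ := fun j => ∑ i, e (j, i) with hr
  set c : Fin k → ℝ := fun i => ∑ j, e (j, i) with hc
  set S : ℝ := ∑ j, r j with hS
  have hcS : ∑ i, c i = S := by
    rw [hS, hr, hc]; exact Finset.sum_comm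
  have hrowsum : ∀ j : Fin n, ∑ x ∈ ({j} ×ˢ (univ : Finset (Fin k))), e x = r j := by
    intro j; rw [Finset.sum_product, Finset.sum_singleton]
  have hcolsum : ∀ i : Fin k, ∑ x ∈ ((univ : Finset (Fin n)) ×ˢ {i}), e x = c i := by
    intro i; rw [Finset.sum_product]; simp [hc]
  have hμuniv : μ (univ : Finset (Fin n × Fin k)) = S := by
    rw [hsum, hS, hr]
    exact Fintype.sum_prod_type _
  -- μ of row ∪ col
  have hμA : ∀ (j : Fin n) (i : Fin k),
      μ (({j} ×ˢ univ) ∪ ((univ : Finset (Fin n)) ×ˢ {i})) = r j + c i - e (j, i) := by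
    intro j i
    have hinter : ({j} ×ˢ (univ : Finset (Fin k))) ∩ ((univ : Finset (Fin n)) ×ˢ {i})
        = {(j, i)} := by
      ext ⟨a, b⟩
      simp only [Finset.mem_inter, Finset.mem_product, Finset.mem_singleton, Finset.mem_univ,
        true_and, and_true, Prod.mk.injEq]
    have hui := Finset.sum_union_inter (s₁ := {j} ×ˢ (univ : Finset (Fin k)))
      (s₂ := (univ : Finset (Fin n)) ×ˢ {i}) (f := e)
    rw [hinter, Finset.sum_singleton, hrowsum, hcolsum] at hui
    rw [hsum]
    linarith [hui]
  -- μ of complement of col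
  have hμC : ∀ i : Fin k, μ ((univ : Finset (Fin n × Fin k)) \ (univ ×ˢ {i})) = S - c i := by
    intro i
    have hd : Disjoint ((univ : Finset (Fin n × Fin k)) \ (univ ×ˢ {i})) (univ ×ˢ {i}) :=
      Finset.sdiff_disjoint
    have hu := hμadd _ _ hd
    rw [Finset.sdiff_union_of_subset (Finset.subset_univ _), hμuniv] at hu
    have : μ ((univ : Finset (Fin n)) ×ˢ {i}) = c i := by rw [hsum]; exact hcolsum i
    linarith [hu, this]
  -- f values
  have hf3 : ∀ (j : Fin n) (i : Fin k),
      fkn n k (({j} ×ˢ univ) ∪ ((univ : Finset (Fin n)) ×ˢ {i})) = 3 := by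
    intro j i
    have hmem : (j, i) ∈ ({j} ×ˢ univ) ∪ ((univ : Finset (Fin n)) ×ˢ {i}) := by
      simp
    rw [fkn_ne_empty (Finset.ne_empty_of_mem hmem), if_pos]
    constructor
    · intro j'
      exact ⟨i, by simp⟩
    · exact ⟨j, fun i' => by simp⟩
  have hf1 : ∀ i : Fin k,
      fkn n k ((univ : Finset (Fin n × Fin k)) \ (univ ×ˢ {i})) = 1 := by
    intro i
    have : Nontrivial (Fin k) := Fin.nontrivial_iff_two_le.mpr hk
    obtain ⟨i', hi'⟩ := exists_ne i
    have hj0 : (0 : ℕ) < n := by omega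
    have hmem : ((⟨0, hj0⟩ : Fin n), i') ∈ (univ : Finset (Fin n × Fin k)) \ (univ ×ˢ {i}) := by
      simp [Ne.symm hi']
    rw [fkn_ne_empty (Finset.ne_empty_of_mem hmem), if_neg]
    rintro ⟨-, j0, hj0'⟩
    have := hj0' i
    simp at this
  -- inequalities
  have hineq1 : ∀ (j : Fin n) (i : Fin k), 3 - K ≤ r j + c i - e (j, i) := by
    intro j i
    have h := hcl (({j} ×ˢ univ) ∪ ((univ : Finset (Fin n)) ×ˢ {i}))
    rw [hf3 j i, hμA j i] at h
    have := abs_le.mp h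
    linarith [this.1, this.2]
  have hineq2 : ∀ i : Fin k, S - c i ≤ 1 + K := by
    intro i
    have h := hcl ((univ : Finset (Fin n × Fin k)) \ (univ ×ˢ {i}))
    rw [hf1 i, hμC i] at h
    have := abs_le.mp h
    linarith [this.1, this.2]
  -- sum inequalities
  have hsum1 : (n : ℝ) * k * (3 - K) ≤ ((k : ℝ) + n - 1) * S := by
    have h1 : ∑ j : Fin n, ∑ i : Fin k, (3 - K) ≤
        ∑ j : Fin n, ∑ i : Fin k, (r j + c i - e (j, i)) :=
      Finset.sum_le_sum fun j _ => Finset.sum_le_sum fun i _ => hineq1 j i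
    have hL : ∑ j : Fin n, ∑ i : Fin k, (3 - K) = (n : ℝ) * k * (3 - K) := by
      simp [Finset.sum_const, mul_assoc]
      ring
    have hRe : ∑ j : Fin n, ∑ i : Fin k, (r j + c i - e (j, i))
        = (k : ℝ) * S + (n : ℝ) * S - S := by
      have h2 : ∑ j : Fin n, ∑ i : Fin k, (r j + c i - e (j, i))
          = ∑ j : Fin n, ((k : ℝ) * r j + S - r j) := by
        refine Finset.sum_congr rfl fun j _ => ?_
        rw [Finset.sum_sub_distrib, Finset.sum_add_distrib, Finset.sum_const, hcS]
        simp [hr, nsmul_eq_mul]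
      rw [h2, Finset.sum_sub_distrib, Finset.sum_add_distrib, Finset.sum_const,
        ← Finset.mul_sum, ← hS]
      simp [nsmul_eq_mul]
    rw [hL, hRe] at h1
    linarith
  have hsum2 : ((k : ℝ) - 1) * S ≤ (k : ℝ) * (1 + K) := by
    have h1 : ∑ i : Fin k, (S - c i) ≤ ∑ i : Fin k, (1 + K) :=
      Finset.sum_le_sum fun i _ => hineq2 i
    rw [Finset.sum_sub_distrib, Finset.sum_const, Finset.sum_const, hcS] at h1
    simp [nsmul_eq_mul] at h1
    linarith
  -- final algebra
  have hk2 : (2 : ℝ) ≤ (k : ℝ) := by exact_mod_cast hk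
  have hn2 : (2 : ℝ) ≤ (n : ℝ) := by exact_mod_cast hn
  have hkpos : (0 : ℝ) < k := by linarith
  have hD : (0 : ℝ) < (n : ℝ) * k + k - 1 := by nlinarith
  have key : 3 * (n : ℝ) * k - k - 4 * n + 1 ≤ K * ((n : ℝ) * k + k - 1) := by
    have H3 := mul_le_mul_of_nonneg_left hsum1 (by linarith : (0 : ℝ) ≤ (k : ℝ) - 1)
    have H4 := mul_le_mul_of_nonneg_left hsum2 (by linarith : (0 : ℝ) ≤ (k : ℝ) + n - 1)
    have H5 : (k : ℝ) * (3 * (n : ℝ) * k - k - 4 * n + 1)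
        ≤ (k : ℝ) * (K * ((n : ℝ) * k + k - 1)) := by nlinarith [H3, H4]
    exact le_of_mul_le_mul_left H5 hkpos
  have hDne : ((n : ℝ) + 1) * k - 1 ≠ 0 := by nlinarith
  have hkne : (k : ℝ) ≠ 0 := ne_of_gt hkpos
  have hrhs : 3 - 4 * (k : ℝ) / (((n : ℝ) + 1) * k - 1)
      - ((n : ℝ) - 1) / k * (4 * k / (((n : ℝ) + 1) * k - 1))
      = (3 * (n : ℝ) * k - k - 4 * n + 1) / ((n : ℝ) * k + k - 1) := by
    have hD2 : (n : ℝ) * k + k - 1 ≠ 0 := ne_of_gt hD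
    have hDeq : ((n : ℝ) + 1) * k - 1 = (n : ℝ) * k + k - 1 := by ring
    rw [hDeq]
    field_simp
    linear_combination (-3 : ℝ) * mul_inv_cancel₀ hD2
  rw [ge_iff_le, hrhs, div_le_iff₀ hD]
  exact key
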